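/- Suppose R : [0, T_max − 2D] → ℝ is such that (i) R is strictly increasing on each interval where N(τ) is constant (monotonicity), and (ii) R(τ) > R(τ') whenever N(τ) > N(τ') and τ is the largest fallow giving N(τ) seasons (each season is profitable). Then any maximizer of R on [0, T_max − 2D] belongs to the finite set Ξ of fallow durations for which the last harvest occurs exactly at T_max. -/

import Mathlib

/-- If the profit `R` is strictly increasing in the fallow duration among fallows
yielding the same number of seasons `N(τ)` (monotonicity), and losing a season
strictly decreases profit compared with the largest fallow giving the larger
number of seasons (each season is profitable), then any maximizer of `R` on
`[0, Tmax - 2D]` belongs to the set `Ξ` of fallow durations for which the last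
harvest occurs exactly at `Tmax`. -/
theorem maximizer_in_Xi (D Tmax : ℝ) (hD : 0 < D) (hT : 2 * D < Tmax)
    (R : ℝ → ℝ) :
    let N : ℝ → ℕ := fun τ => ⌊(Tmax + τ) / (D + τ)⌋₊
    let I : Set ℝ := Set.Icc 0 (Tmax - 2 * D)
    let Ξ : Set ℝ := {τ ∈ I | Tmax = (N τ : ℝ) * D + ((N τ : ℝ) - 1) * τ}
    -- (i) monotonicity: longer fallows with the same number of seasons give
    -- strictly larger profit
    (∀ τ ∈ I, ∀ τ' ∈ I, τ < τ' → N τ = N τ' → R τ < R τ') →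
    -- (ii) each season is profitable: losing seasons decreases profit
    (∀ τ ∈ Ξ, ∀ τ' ∈ I, N τ' < N τ → R τ' < R τ) →
    ∀ τstar ∈ I, (∀ τ ∈ I, R τ ≤ R τstar) → τstar ∈ Ξ := by
  intro N I Ξ hi _hii τstar hτ hmax
  obtain ⟨hτ0, hτ1⟩ := hτ
  have hDτ : (0:ℝ) < D + τstar := by linarith
  set n : ℕ := N τstar with hn
  -- n ≥ 2
  have hn2 : 2 ≤ n := by
    have : (2:ℝ) ≤ (Tmax + τstar) / (D + τstar) := by
      rw [le_div_iff₀ hDτ]; linarith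
    exact_mod_cast Nat.le_floor (by exact_mod_cast this)
  have hn1 : (1:ℝ) ≤ (n:ℝ) - 1 := by
    have : (2:ℝ) ≤ (n:ℝ) := by exact_mod_cast hn2
    linarith
  have hn1pos : (0:ℝ) < (n:ℝ) - 1 := by linarith
  -- floor lower bound: n(D+τ*) ≤ Tmax + τ*
  have hfl : (n:ℝ) ≤ (Tmax + τstar) / (D + τstar) := by
    have := Nat.floor_le (R := ℝ) (a := (Tmax + τstar) / (D + τstar))
      (div_nonneg (by linarith) (by linarith))
    exact_mod_cast this
  have hkey : (n:ℝ) * (D + τstar) ≤ Tmax + τstar := by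
    rw [le_div_iff₀ hDτ] at hfl; linarith
  -- define τ' : largest fallow with n seasons
  set τ' : ℝ := (Tmax - (n:ℝ) * D) / ((n:ℝ) - 1) with hτ'def
  have hτ'eq : Tmax = (n:ℝ) * D + ((n:ℝ) - 1) * τ' := by
    rw [hτ'def]; field_simp [hn1pos.ne']; ring
  have hge : τstar ≤ τ' := by
    rw [hτ'def, le_div_iff₀ hn1pos]; nlinarith
  have hτ'I : τ' ∈ I := by
    constructor
    · linarith
    · rw [hτ'def, div_le_iff₀ hn1pos]
      nlinarith
  have hDτ' : (0:ℝ) < D + τ' := by linarith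
  have hNτ' : N τ' = n := by
    show ⌊(Tmax + τ') / (D + τ')⌋₊ = n
    have : (Tmax + τ') / (D + τ') = (n:ℝ) := by
      rw [div_eq_iff (ne_of_gt hDτ')]; nlinarith [hτ'eq]
    rw [this, Nat.floor_natCast]
  rcases eq_or_lt_of_le hge with heq | hlt
  · refine ⟨⟨hτ0, hτ1⟩, ?_⟩
    rw [show N τstar = n from rfl]
    rw [heq]; exact hτ'eq
  · exfalso
    have := hi τstar ⟨hτ0, hτ1⟩ τ' hτ'I hlt (by rw [hNτ', hn])
    exact absurd (hmax τ' hτ'I) (not_le.mpr this)
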